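/- arXiv:2503.15804 — 8 statements merged into one kernel-verified Lean document; each statement's English description precedes it below -/
import Mathlib

section
/- Suppose X(t) ∈ ℝ^{N×n} is defined for integers t ≥ −1 and satisfies, for every integer t ≥ 0, X(t+1) = ((1−cα)I + cαW(t+1))·(2X(t) − X(t−1) − α∇F(X(t)) + α∇F(X(t−1))). Define D(t) = (1/α)(X(t−1) − X(t)) − ∇F(X(t−1)) for t ≥ 0. Then for every integer t ≥ 0 one has D(t+1) = D(t) + c(I − W(t+1))(X(t) − α∇F(X(t)) − αD(t)) and X(t+1) = X(t) − α∇F(X(t)) − αD(t+1). -/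
open Matrix
set_option linter.unusedVariables false

noncomputable def Jmat (N : ℕ) : Matrix (Fin N) (Fin N) ℝ :=
  Matrix.of fun _ _ => (N : ℝ)⁻¹

noncomputable def gradF {N n : ℕ}
    (g : Fin N → EuclideanSpace ℝ (Fin n) → EuclideanSpace ℝ (Fin n))
    (X : Matrix (Fin N) (Fin n) ℝ) : Matrix (Fin N) (Fin n) ℝ :=
  Matrix.of fun i => (WithLp.equiv 2 (Fin n → ℝ))
    (g i ((WithLp.equiv 2 (Fin n → ℝ)).symm (X i)))

/-- the two-step FedCET recursion on `X` (with companion variable `D`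
defined by `D(t) = α⁻¹(X(t−1) − X(t)) − ∇F(X(t−1))`) is equivalent to the compact
matrix form of the iteration. -/
theorem fedcet_matrix_form
    {N n : ℕ} (hN : 1 ≤ N) (hn : 1 ≤ n)
    (L μ : ℝ) (hμ : 0 < μ) (hLμ : μ ≤ L)
    (f : Fin N → EuclideanSpace ℝ (Fin n) → ℝ)
    (g : Fin N → EuclideanSpace ℝ (Fin n) → EuclideanSpace ℝ (Fin n))
    (hdiff : ∀ i, Differentiable ℝ (f i))
    (hgrad : ∀ i x, HasGradientAt (f i) (g i x) x)
    (hsmooth : ∀ i x y, ‖g i x - g i y‖ ≤ L * ‖x - y‖)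
    (hsc : ∀ i x y, μ * ‖x - y‖ ^ 2 ≤ (inner ℝ (g i x - g i y) (x - y) : ℝ))
    (τ : ℕ) (hτ : 1 ≤ τ) (α c : ℝ) (hα : 0 < α) (hc : 0 < c)
    (X D : ℤ → Matrix (Fin N) (Fin n) ℝ)
    (hX : ∀ t : ℤ, 0 ≤ t →
      X (t + 1) =
        ((1 - c * α) • (1 : Matrix (Fin N) (Fin N) ℝ)
            + (c * α) • (if (τ : ℤ) ∣ (t + 1) then Jmat N else 1)) *
          ((2 : ℝ) • X t - X (t - 1) - α • gradF g (X t) + α • gradF g (X (t - 1))))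
    (hD : ∀ t : ℤ, 0 ≤ t →
      D t = α⁻¹ • (X (t - 1) - X t) - gradF g (X (t - 1))) :
    ∀ t : ℤ, 0 ≤ t →
      D (t + 1) = D t
          + c • (((1 : Matrix (Fin N) (Fin N) ℝ)
              - (if (τ : ℤ) ∣ (t + 1) then Jmat N else 1)) *
            (X t - α • gradF g (X t) - α • D t)) ∧
      X (t + 1) = X t - α • gradF g (X t) - α • D (t + 1) := by
  intro t ht
  have hα' : α ≠ 0 := hα.ne'
  set W : Matrix (Fin N) (Fin N) ℝ := if (τ : ℤ) ∣ (t + 1) then Jmat N else 1 with hW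
  have hDt := hD t ht
  have hDt1 := hD (t + 1) (by linarith)
  rw [add_sub_cancel_right] at hDt1
  have hαD : α • D t = X (t - 1) - X t - α • gradF g (X (t - 1)) := by
    rw [hDt]; match_scalars <;> field_simp
  set M : Matrix (Fin N) (Fin n) ℝ :=
    X t - α • gradF g (X t) - α • D t with hM
  have hαDt : α • D t = X t - α • gradF g (X t) - M := by rw [hM]; abel
  have hMeq : (2 : ℝ) • X t - X (t - 1) - α • gradF g (X t)
      + α • gradF g (X (t - 1)) = M := by
    rw [hM, hαD]; module
  have hX1 : X (t + 1) = M - (c * α) • (M - W * M) := by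
    rw [hX t ht, hMeq, Matrix.add_mul, Matrix.smul_mul, Matrix.smul_mul,
      Matrix.one_mul]
    module
  have hαD1 : α • D (t + 1) = X t - X (t + 1) - α • gradF g (X t) := by
    rw [hDt1]; match_scalars <;> field_simp
  have h1W : ((1 : Matrix (Fin N) (Fin N) ℝ) - W) * M = M - W * M := by
    rw [Matrix.sub_mul, Matrix.one_mul]
  have key : α • D (t + 1) = α • (D t + c • ((1 - W) * M)) := by
    rw [smul_add, smul_smul, hαD1, hX1, h1W, hαDt]
    module
  have hD1 : D (t + 1) = D t + c • ((1 - W) * M) := by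
    exact smul_right_injective _ hα' key
  refine ⟨hD1, ?_⟩
  rw [hX1, hD1, h1W, smul_add, smul_smul, hαDt]
  module
end

section
/- Let D̂, X̂ ∈ ℝ^{N×n}. The following are equivalent: (a) for both choices W = I and W = J one has D̂ = D̂ + c(I − W)(X̂ − α∇F(X̂) − αD̂) and X̂ = X̂ − α∇F(X̂) − αD̂ (i.e. (D̂, X̂) is a fixed point of the FedCET iteration for every t); (b) D̂ + ∇F(X̂) = 0 and (I − J)X̂ = 0. -/
open Matrix
set_option linter.unusedVariables false

/-- `(D̂, X̂)` is a fixed point of the FedCET iteration for both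
`W = I` and `W = J` iff `D̂ + ∇F(X̂) = 0` and `(I − J)X̂ = 0`. -/
theorem fedcet_fixed_point_iff
    {N n : ℕ} (hN : 1 ≤ N) (hn : 1 ≤ n)
    (L μ : ℝ) (hμ : 0 < μ) (hLμ : μ ≤ L)
    (f : Fin N → EuclideanSpace ℝ (Fin n) → ℝ)
    (g : Fin N → EuclideanSpace ℝ (Fin n) → EuclideanSpace ℝ (Fin n))
    (hdiff : ∀ i, Differentiable ℝ (f i))
    (hgrad : ∀ i x, HasGradientAt (f i) (g i x) x)
    (hsmooth : ∀ i x y, ‖g i x - g i y‖ ≤ L * ‖x - y‖)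
    (hsc : ∀ i x y, μ * ‖x - y‖ ^ 2 ≤ (inner ℝ (g i x - g i y) (x - y) : ℝ))
    (α c : ℝ) (hα : 0 < α) (hc : 0 < c)
    (Dhat Xhat : Matrix (Fin N) (Fin n) ℝ) :
    ((∀ W : Matrix (Fin N) (Fin N) ℝ, (W = 1 ∨ W = Jmat N) →
        Dhat = Dhat + c • (((1 : Matrix (Fin N) (Fin N) ℝ) - W) *
          (Xhat - α • gradF g Xhat - α • Dhat))) ∧
      Xhat = Xhat - α • gradF g Xhat - α • Dhat)
    ↔ (Dhat + gradF g Xhat = 0 ∧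
        ((1 : Matrix (Fin N) (Fin N) ℝ) - Jmat N) * Xhat = 0) := by
  have hα' : α ≠ 0 := ne_of_gt hα
  have hc' : c ≠ 0 := ne_of_gt hc
  constructor
  · rintro ⟨hW, hX⟩
    have h1 : Xhat - (α • gradF g Xhat + α • Dhat) = Xhat := by
      rw [← sub_sub]; exact hX.symm
    have h2 : α • (gradF g Xhat + Dhat) = 0 := by
      rw [smul_add]; exact sub_eq_self.mp h1
    have h3 : gradF g Xhat + Dhat = 0 := (smul_eq_zero.mp h2).resolve_left hα'
    refine ⟨by rw [add_comm]; exact h3, ?_⟩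
    have h4 := hW (Jmat N) (Or.inr rfl)
    rw [← hX] at h4
    have h5 : c • (((1 : Matrix (Fin N) (Fin N) ℝ) - Jmat N) * Xhat) = 0 :=
      (left_eq_add.mp h4)
    exact (smul_eq_zero.mp h5).resolve_left hc'
  · rintro ⟨hDG, hJX⟩
    have hfix : Xhat - α • gradF g Xhat - α • Dhat = Xhat := by
      rw [sub_sub, ← smul_add, add_comm (gradF g Xhat), hDG, smul_zero, sub_zero]
    refine ⟨?_, hfix.symm⟩
    rintro W (rfl | rfl)
    · simp
    · rw [hfix, hJX, smul_zero, add_zero]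
end

section
/- Let X̂ ∈ ℝ^{N×n} satisfy (I − J)X̂ = 0, so that all rows of X̂ equal a common vector x̂ ∈ ℝ^n. Then x̂ is the (unique) minimizer x̄* of f if and only if there exists P ∈ ℝ^{N×n} such that (I − J)P + ∇F(X̂) = 0. -/
open Matrix
set_option linter.unusedVariables false

lemma grad_lb {n : ℕ} (f : EuclideanSpace ℝ (Fin n) → ℝ)
    (g : EuclideanSpace ℝ (Fin n) → EuclideanSpace ℝ (Fin n))
    (hgrad : ∀ x, HasGradientAt f (g x) x)
    (hmono : ∀ x y, (0:ℝ) ≤ inner ℝ (g x - g y) (x - y))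
    (x y : EuclideanSpace ℝ (Fin n)) :
    f x + (inner ℝ (g x) (y - x) : ℝ) ≤ f y := by
  set φ : ℝ → ℝ := fun t => f (x + t • (y - x)) with hφ
  have hD : ∀ t : ℝ, HasDerivAt φ (inner ℝ (g (x + t • (y - x))) (y - x) : ℝ) t := by
    intro t
    have hγ : HasDerivAt (fun t : ℝ => x + t • (y - x)) (y - x) t := by
      simpa using ((hasDerivAt_id t).smul_const (y - x)).const_add x
    have := ((hgrad (x + t • (y - x))).hasFDerivAt).comp_hasDerivAt t hγ
    simp only [InnerProductSpace.toDual_apply_apply] at this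
    exact this
  have hcont : Continuous φ := by
    rw [continuous_iff_continuousAt]; exact fun t => (hD t).continuousAt
  obtain ⟨c, hc, hceq⟩ := exists_hasDerivAt_eq_slope (a := (0:ℝ)) (b := 1) φ
      (fun t => (inner ℝ (g (x + t • (y - x))) (y - x) : ℝ)) (by norm_num)
      hcont.continuousOn (fun t _ => hD t)
  have h01 : φ 1 - φ 0 = (inner ℝ (g (x + c • (y - x))) (y - x) : ℝ) := by
    rw [hceq]; ring
  have hmon := hmono (x + c • (y - x)) x
  have hz : x + c • (y - x) - x = c • (y - x) := by abel
  rw [hz] at hmon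
  have hsub : g (x + c • (y - x)) - g x = g (x + c • (y - x)) - g x := rfl
  rw [inner_smul_right] at hmon
  have hcpos : (0:ℝ) < c := hc.1
  have hineq : (inner ℝ (g x) (y - x) : ℝ) ≤ inner ℝ (g (x + c • (y - x))) (y - x) := by
    have : (0:ℝ) ≤ (inner ℝ (g (x + c • (y - x)) - g x) (y - x) : ℝ) :=
      nonneg_of_mul_nonneg_right hmon hcpos
    rw [inner_sub_left] at this; linarith
  have hφ1 : φ 1 = f y := by simp [hφ]
  have hφ0 : φ 0 = f x := by simp [hφ]
  rw [hφ1, hφ0] at h01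
  linarith

/-- if all rows of `X̂` equal a common vector `x̂`, then `x̂` minimizes the
global loss `f = (1/N)∑ f_i` iff there exists `P` with `(I − J)P + ∇F(X̂) = 0`. -/
theorem consensus_optimal_iff_exists_P
    {N n : ℕ} (hN : 1 ≤ N) (hn : 1 ≤ n)
    (L μ : ℝ) (hμ : 0 < μ) (hLμ : μ ≤ L)
    (f : Fin N → EuclideanSpace ℝ (Fin n) → ℝ)
    (g : Fin N → EuclideanSpace ℝ (Fin n) → EuclideanSpace ℝ (Fin n))
    (hdiff : ∀ i, Differentiable ℝ (f i))
    (hgrad : ∀ i x, HasGradientAt (f i) (g i x) x)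
    (hsmooth : ∀ i x y, ‖g i x - g i y‖ ≤ L * ‖x - y‖)
    (hsc : ∀ i x y, μ * ‖x - y‖ ^ 2 ≤ (inner ℝ (g i x - g i y) (x - y) : ℝ))
    (Xhat : Matrix (Fin N) (Fin n) ℝ)
    (hconsensus : ((1 : Matrix (Fin N) (Fin N) ℝ) - Jmat N) * Xhat = 0)
    (xhat : EuclideanSpace ℝ (Fin n))
    (hrow : ∀ i : Fin N, Xhat i = (WithLp.equiv 2 (Fin n → ℝ)) xhat) :
    (∀ y : EuclideanSpace ℝ (Fin n),
        (N : ℝ)⁻¹ * ∑ i : Fin N, f i xhat ≤ (N : ℝ)⁻¹ * ∑ i : Fin N, f i y)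
    ↔ (∃ P : Matrix (Fin N) (Fin n) ℝ,
        ((1 : Matrix (Fin N) (Fin N) ℝ) - Jmat N) * P + gradF g Xhat = 0) := by
  have hN0 : (N : ℝ) ≠ 0 := by positivity
  have hNinv : (0:ℝ) < (N:ℝ)⁻¹ := by positivity
  have hGentry : ∀ i k, gradF g Xhat i k = g i xhat k := by
    intro i k
    simp [gradF, hrow]
  -- key: RHS ↔ ∑ g i xhat = 0
  have hJG : ∀ i k, (Jmat N * gradF g Xhat) i k = (N:ℝ)⁻¹ * ∑ j, g j xhat k := by
    intro i k
    rw [Matrix.mul_apply, Finset.mul_sum]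
    exact Finset.sum_congr rfl fun j _ => by rw [hGentry]; rfl
  have hkey : (∃ P : Matrix (Fin N) (Fin n) ℝ,
        ((1 : Matrix (Fin N) (Fin N) ℝ) - Jmat N) * P + gradF g Xhat = 0)
      ↔ (∑ i, g i xhat) = 0 := by
    constructor
    · rintro ⟨P, hP⟩
      have hJJ : Jmat N * Jmat N = Jmat N := by
        ext i j
        simp [Jmat, Matrix.mul_apply, Finset.sum_const]
        field_simp
      have h2 : Jmat N * (((1 : Matrix (Fin N) (Fin N) ℝ) - Jmat N) * P + gradF g Xhat) = 0 := by
        rw [hP, Matrix.mul_zero]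
      rw [Matrix.mul_add, ← Matrix.mul_assoc, Matrix.mul_sub, Matrix.mul_one, hJJ, sub_self,
        Matrix.zero_mul, zero_add] at h2
      have i0 : Fin N := ⟨0, hN⟩
      ext k
      have := congrFun (congrFun h2 i0) k
      rw [hJG] at this
      have hsum : ∑ j, g j xhat k = 0 := by
        simpa [hN0] using this
      simpa [WithLp.ofLp_sum] using hsum
    · intro hS
      refine ⟨-(gradF g Xhat), ?_⟩
      have : ((1 : Matrix (Fin N) (Fin N) ℝ) - Jmat N) * -(gradF g Xhat) + gradF g Xhat
          = Jmat N * gradF g Xhat := by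
        rw [Matrix.mul_neg, Matrix.sub_mul, Matrix.one_mul]; abel
      rw [this]
      funext i k
      rw [hJG]
      have : ∑ j, g j xhat k = 0 := by
        have := congrArg (fun v : EuclideanSpace ℝ (Fin n) => v k) hS
        simp only [WithLp.ofLp_sum] at this
        simpa using this
      simp [this]
  rw [hkey]
  constructor
  · -- minimizer → sum of gradients zero
    intro hmin
    have hF : HasFDerivAt (fun x => ∑ i, f i x)
        (∑ i, InnerProductSpace.toDual ℝ _ (g i xhat)) xhat :=
      HasFDerivAt.fun_sum fun i _ => (hgrad i xhat).hasFDerivAt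
    have hloc : IsLocalMin (fun x => ∑ i, f i x) xhat := by
      apply Filter.Eventually.of_forall
      intro y
      have := hmin y
      exact le_of_mul_le_mul_left (by simpa using this) hNinv
    have h0 := hloc.hasFDerivAt_eq_zero hF
    have : InnerProductSpace.toDual ℝ _ (∑ i, g i xhat) = 0 := by
      rw [map_sum]; exact h0
    exact (InnerProductSpace.toDual ℝ _).map_eq_zero_iff.mp this
  · -- sum of gradients zero → minimizer
    intro hS y
    have hmono : ∀ i, ∀ x z, (0:ℝ) ≤ inner ℝ (g i x - g i z) (x - z) := by
      intro i x z
      have := hsc i x z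
      nlinarith [sq_nonneg ‖x - z‖]
    have hle : ∀ i, f i xhat + (inner ℝ (g i xhat) (y - xhat) : ℝ) ≤ f i y :=
      fun i => grad_lb (f i) (g i) (hgrad i) (hmono i) xhat y
    have hsum : ∑ i, (f i xhat + (inner ℝ (g i xhat) (y - xhat) : ℝ)) ≤ ∑ i, f i y :=
      Finset.sum_le_sum fun i _ => hle i
    rw [Finset.sum_add_distrib, ← sum_inner, hS, inner_zero_left, add_zero] at hsum
    exact mul_le_mul_of_nonneg_left hsum hNinv.le
end

section
/- Assume ταL ≤ 2. Then for every integer k ≥ 0, with B₁ = τ³(1 + 2/τ)^{2τ−2}: (1/(τα))‖A(k) + B(k)‖² ≤ 2ατ‖D(τk+τ) − D(τk)‖² + B₁L⁴α³‖X(τk) − X*‖² + B₁L²α³‖D(τk) − D*‖², where A(k) = (τ−1)α∇F(X(τk)) − α∑_{h=1}^{τ−1}∇F(X(τk + h)) and B(k) = (τ−1)α(D(τk + τ) − D(τk)). -/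
open Matrix
set_option linter.unusedVariables false
set_option maxHeartbeats 2000000

/-- Squared weighted norm `‖A‖_Q² = tr(AᵀQA)`. -/
noncomputable def nsqQ {N n : ℕ} (Q : Matrix (Fin N) (Fin N) ℝ)
    (A : Matrix (Fin N) (Fin n) ℝ) : ℝ :=
  Matrix.trace (Aᵀ * Q * A)

/-- Squared Frobenius norm `‖A‖² = tr(AᵀA)`. -/
noncomputable def frobSq {N n : ℕ} (A : Matrix (Fin N) (Fin n) ℝ) : ℝ :=
  Matrix.trace (Aᵀ * A)

/- ## Auxiliary lemmas -/

noncomputable def vecE {N n : ℕ} (A : Matrix (Fin N) (Fin n) ℝ) :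
    EuclideanSpace ℝ (Fin N × Fin n) :=
  (WithLp.equiv 2 _).symm (fun p => A p.1 p.2)

lemma frobSq_eq_norm_sq {N n : ℕ} (A : Matrix (Fin N) (Fin n) ℝ) :
    frobSq A = ‖vecE A‖ ^ 2 := by
  rw [PiLp.norm_sq_eq_of_L2]
  simp [frobSq, Matrix.trace, Matrix.diag, Matrix.mul_apply, vecE, WithLp.equiv,
    Fintype.sum_prod_type, sq, Equiv.refl_apply]
  rw [Finset.sum_comm]

lemma vecE_add {N n : ℕ} (A B : Matrix (Fin N) (Fin n) ℝ) :
    vecE (A + B) = vecE A + vecE B := rfl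

lemma vecE_sub {N n : ℕ} (A B : Matrix (Fin N) (Fin n) ℝ) :
    vecE (A - B) = vecE A - vecE B := rfl

lemma vecE_neg {N n : ℕ} (A : Matrix (Fin N) (Fin n) ℝ) :
    vecE (-A) = - vecE A := rfl

lemma vecE_smul {N n : ℕ} (r : ℝ) (A : Matrix (Fin N) (Fin n) ℝ) :
    vecE (r • A) = r • vecE A := rfl

lemma vecE_sum {N n : ℕ} {ι : Type*} (s : Finset ι) (F : ι → Matrix (Fin N) (Fin n) ℝ) :
    vecE (∑ i ∈ s, F i) = ∑ i ∈ s, vecE (F i) := by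
  classical
  induction s using Finset.induction with
  | empty => rfl
  | insert _ _ h ih => simp [Finset.sum_insert h, vecE_add, ih]

noncomputable def rowE {N n : ℕ} (A : Matrix (Fin N) (Fin n) ℝ) (i : Fin N) :
    EuclideanSpace ℝ (Fin n) :=
  (WithLp.equiv 2 (Fin n → ℝ)).symm (A i)

lemma frobSq_eq_sum_rows {N n : ℕ} (A : Matrix (Fin N) (Fin n) ℝ) :
    frobSq A = ∑ i, ‖rowE A i‖ ^ 2 := by
  simp only [frobSq, Matrix.trace, Matrix.diag, Matrix.mul_apply, Matrix.transpose_apply]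
  rw [Finset.sum_comm]
  refine Finset.sum_congr rfl fun i _ => ?_
  rw [PiLp.norm_sq_eq_of_L2]
  simp [rowE, sq]

lemma rowE_sub {N n : ℕ} (A B : Matrix (Fin N) (Fin n) ℝ) (i : Fin N) :
    rowE (A - B) i = rowE A i - rowE B i := rfl

lemma rowE_gradF {N n : ℕ}
    (g : Fin N → EuclideanSpace ℝ (Fin n) → EuclideanSpace ℝ (Fin n))
    (X : Matrix (Fin N) (Fin n) ℝ) (i : Fin N) :
    rowE (gradF g X) i = g i (rowE X i) := rfl

lemma norm_vecE_gradF_sub {N n : ℕ} {L : ℝ} (hL : 0 ≤ L)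
    (g : Fin N → EuclideanSpace ℝ (Fin n) → EuclideanSpace ℝ (Fin n))
    (hsmooth : ∀ i x y, ‖g i x - g i y‖ ≤ L * ‖x - y‖)
    (X Y : Matrix (Fin N) (Fin n) ℝ) :
    ‖vecE (gradF g X - gradF g Y)‖ ≤ L * ‖vecE (X - Y)‖ := by
  have h1 : frobSq (gradF g X - gradF g Y) ≤ L ^ 2 * frobSq (X - Y) := by
    rw [frobSq_eq_sum_rows, frobSq_eq_sum_rows, Finset.mul_sum]
    refine Finset.sum_le_sum fun i _ => ?_
    rw [rowE_sub, rowE_gradF, rowE_gradF, rowE_sub]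
    have := hsmooth i (rowE X i) (rowE Y i)
    nlinarith [norm_nonneg (g i (rowE X i) - g i (rowE Y i)), norm_nonneg (rowE X i - rowE Y i)]
  rw [frobSq_eq_norm_sq, frobSq_eq_norm_sq] at h1
  nlinarith [norm_nonneg (vecE (gradF g X - gradF g Y)), norm_nonneg (vecE (X - Y)),
    mul_nonneg hL (norm_nonneg (vecE (X - Y)))]

lemma pow_one_add_sub_one_le {x : ℝ} (hx : 0 ≤ x) (m : ℕ) :
    (1 + x) ^ (m + 1) - 1 ≤ (m + 1 : ℝ) * x * (1 + x) ^ m := by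
  induction m with
  | zero => simp
  | succ m ih =>
    have h1 : (0:ℝ) ≤ (1 + x) ^ m := by positivity
    have h2 : (1 + x) ^ m ≤ (1 + x) ^ (m + 1) := by
      apply pow_le_pow_right₀ (by linarith) (by omega)
    have : (1 + x) ^ (m + 2) - 1 = ((1 + x) ^ (m + 1) - 1) + x * (1 + x) ^ (m + 1) := by
      ring
    rw [this]
    have h3 : (m + 1 : ℝ) * x * (1 + x) ^ m ≤ (m + 1 : ℝ) * x * (1 + x) ^ (m + 1) := by
      apply mul_le_mul_of_nonneg_left h2 (by positivity)
    push_cast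
    nlinarith

/- ## Main theorem -/

/-- Lemma 3: bound on `(1/(τα))‖A(k) + B(k)‖²` with
`B₁ = τ³(1 + 2/τ)^{2τ−2}`. -/
theorem fedcet_AB_bound
    {N n : ℕ} (hN : 1 ≤ N) (hn : 1 ≤ n)
    (L μ : ℝ) (hμ : 0 < μ) (hLμ : μ ≤ L)
    (f : Fin N → EuclideanSpace ℝ (Fin n) → ℝ)
    (g : Fin N → EuclideanSpace ℝ (Fin n) → EuclideanSpace ℝ (Fin n))
    (hdiff : ∀ i, Differentiable ℝ (f i))
    (hgrad : ∀ i x, HasGradientAt (f i) (g i x) x)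
    (hsmooth : ∀ i x y, ‖g i x - g i y‖ ≤ L * ‖x - y‖)
    (hsc : ∀ i x y, μ * ‖x - y‖ ^ 2 ≤ (inner ℝ (g i x - g i y) (x - y) : ℝ))
    (τ : ℕ) (hτ : 1 ≤ τ) (α c : ℝ) (hα : 0 < α) (hc : 0 < c)
    (hταL : (τ : ℝ) * α * L ≤ 2)
    (X D : ℕ → Matrix (Fin N) (Fin n) ℝ)
    (hiter : ∀ t : ℕ,
      D (t + 1) = D t
          + c • (((1 : Matrix (Fin N) (Fin N) ℝ)
              - (if τ ∣ (t + 1) then Jmat N else 1)) *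
            (X t - α • gradF g (X t) - α • D t)) ∧
      X (t + 1) = X t - α • gradF g (X t) - α • D (t + 1))
    (xstar : EuclideanSpace ℝ (Fin n))
    (hxstar : ∀ y : EuclideanSpace ℝ (Fin n),
      (N : ℝ)⁻¹ * ∑ i : Fin N, f i xstar ≤ (N : ℝ)⁻¹ * ∑ i : Fin N, f i y)
    (Xstar : Matrix (Fin N) (Fin n) ℝ)
    (hXstar : ∀ i : Fin N, Xstar i = (WithLp.equiv 2 (Fin n → ℝ)) xstar)
    (Dstar : Matrix (Fin N) (Fin n) ℝ) (hDstar : Dstar = - gradF g Xstar) :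
    ∀ k : ℕ,
      ((τ : ℝ) * α)⁻¹ * frobSq
          (((((τ : ℝ) - 1) * α) • gradF g (X (τ * k))
              - α • (∑ h ∈ Finset.Icc 1 (τ - 1), gradF g (X (τ * k + h))))
            + (((τ : ℝ) - 1) * α) • (D (τ * k + τ) - D (τ * k)))
      ≤ 2 * α * (τ : ℝ) * frobSq (D (τ * k + τ) - D (τ * k))
        + ((τ : ℝ) ^ 3 * (1 + 2 / (τ : ℝ)) ^ (2 * τ - 2)) * L ^ 4 * α ^ 3
            * frobSq (X (τ * k) - Xstar)
        + ((τ : ℝ) ^ 3 * (1 + 2 / (τ : ℝ)) ^ (2 * τ - 2)) * L ^ 2 * α ^ 3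
            * frobSq (D (τ * k) - Dstar) := by
  intro k
  have hL : 0 < L := lt_of_lt_of_le hμ hLμ
  have hτR : (0:ℝ) < (τ:ℝ) := by exact_mod_cast Nat.lt_of_lt_of_le Nat.zero_lt_one hτ
  have hτR1 : (1:ℝ) ≤ (τ:ℝ) := by exact_mod_cast hτ
  have hαL : α * L ≤ 2 / (τ:ℝ) := by
    rw [le_div_iff₀ hτR]; nlinarith
  have hαLpos : 0 < α * L := mul_pos hα hL
  -- Step A : D is constant during the window
  have hD : ∀ h, h < τ → D (τ * k + h) = D (τ * k) := by
    intro h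
    induction h with
    | zero => intro _; rfl
    | succ m ih =>
      intro hlt
      have hmlt : m < τ := by omega
      have hndvd : ¬ τ ∣ (τ * k + m + 1) := by
        intro hd
        rw [Nat.add_assoc] at hd
        have : τ ∣ (m + 1) := (Nat.dvd_add_right ⟨k, rfl⟩).mp hd
        have := Nat.le_of_dvd (Nat.succ_pos m) this
        omega
      have h1 := (hiter (τ * k + m)).1
      rw [if_neg hndvd] at h1
      exact (by simpa [sub_self] using h1.trans (by rw [sub_self]; simp [ih hmlt]) : D (τ * k + m + 1) = D (τ * k))
  -- Step B : closed form for X within the window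
  have hX : ∀ h, h < τ → X (τ * k + h) = X (τ * k)
      - α • (∑ s ∈ Finset.range h, (gradF g (X (τ * k + s)) + D (τ * k))) := by
    intro h
    induction h with
    | zero => intro _; simp
    | succ m ih =>
      intro hlt
      have hmlt : m < τ := by omega
      have h2 := (hiter (τ * k + m)).2
      rw [show τ * k + m + 1 = τ * k + (m + 1) by omega, hD (m + 1) hlt] at h2
      rw [h2, Finset.sum_range_succ, smul_add, smul_add, ih hmlt]
      abel
  -- abbreviations
  set a : ℝ := ‖vecE (X (τ * k) - Xstar)‖ with ha_def
  set b : ℝ := ‖vecE (D (τ * k) - Dstar)‖ with hb_def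
  set dd : ℝ := ‖vecE (D (τ * k + τ) - D (τ * k))‖ with hdd_def
  set M : ℝ := L * a + b with hM_def
  set e : ℕ → ℝ := fun h => ‖vecE (X (τ * k + h) - X (τ * k))‖ with he_def
  have ha0 : 0 ≤ a := norm_nonneg _
  have hb0 : 0 ≤ b := norm_nonneg _
  have hM0 : 0 ≤ M := by positivity
  have he0 : ∀ h, 0 ≤ e h := fun h => norm_nonneg _
  -- Step C : per-term bound
  have hterm : ∀ s, ‖vecE (gradF g (X (τ * k + s)) + D (τ * k))‖ ≤ L * e s + M := by
    intro s
    have hsplit : gradF g (X (τ * k + s)) + D (τ * k)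
        = (gradF g (X (τ * k + s)) - gradF g Xstar) + (D (τ * k) - Dstar) := by
      rw [hDstar]; abel
    rw [hsplit, vecE_add]
    have h1 : ‖vecE (gradF g (X (τ * k + s)) - gradF g Xstar)‖
        ≤ L * ‖vecE (X (τ * k + s) - Xstar)‖ :=
      norm_vecE_gradF_sub hL.le g hsmooth _ _
    have h2 : ‖vecE (X (τ * k + s) - Xstar)‖ ≤ e s + a := by
      have : X (τ * k + s) - Xstar = (X (τ * k + s) - X (τ * k)) + (X (τ * k) - Xstar) := by
        abel
      rw [this, vecE_add]
      exact norm_add_le _ _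
    calc ‖vecE (gradF g (X (τ * k + s)) - gradF g Xstar) + vecE (D (τ * k) - Dstar)‖
        ≤ ‖vecE (gradF g (X (τ * k + s)) - gradF g Xstar)‖ + ‖vecE (D (τ * k) - Dstar)‖ :=
          norm_add_le _ _
      _ ≤ L * (e s + a) + b :=
          add_le_add (h1.trans (mul_le_mul_of_nonneg_left h2 hL.le)) le_rfl
      _ = L * e s + M := by rw [hM_def]; ring
  -- Step C' : recursion bound on e
  have he_rec : ∀ h, h < τ → e h ≤ α * ∑ s ∈ Finset.range h, (L * e s + M) := by
    intro h hlt
    have h1 : X (τ * k + h) - X (τ * k)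
        = -(α • ∑ s ∈ Finset.range h, (gradF g (X (τ * k + s)) + D (τ * k))) := by
      rw [hX h hlt]; abel
    show ‖vecE (X (τ * k + h) - X (τ * k))‖ ≤ _
    rw [h1, vecE_neg, norm_neg, vecE_smul, norm_smul, Real.norm_eq_abs,
      abs_of_pos hα, vecE_sum]
    refine mul_le_mul_of_nonneg_left ?_ hα.le
    calc ‖∑ s ∈ Finset.range h, vecE (gradF g (X (τ * k + s)) + D (τ * k))‖
        ≤ ∑ s ∈ Finset.range h, ‖vecE (gradF g (X (τ * k + s)) + D (τ * k))‖ :=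
          norm_sum_le _ _
      _ ≤ ∑ s ∈ Finset.range h, (L * e s + M) :=
          Finset.sum_le_sum fun s _ => hterm s
  -- Step D : Gronwall-type bound
  have hC : ∀ h, h < τ → e h ≤ ((1 + α * L) ^ h - 1) * (M / L) := by
    intro h
    induction h using Nat.strong_induction_on with
    | _ h ih =>
    intro hlt
    have hne : (1:ℝ) + α * L ≠ 1 := by nlinarith
    calc e h ≤ α * ∑ s ∈ Finset.range h, (L * e s + M) := he_rec h hlt
      _ ≤ α * ∑ s ∈ Finset.range h, (L * (((1 + α * L) ^ s - 1) * (M / L)) + M) := by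
          refine mul_le_mul_of_nonneg_left (Finset.sum_le_sum fun s hs => ?_) hα.le
          have hsh := Finset.mem_range.mp hs
          have := ih s hsh (lt_trans hsh hlt)
          nlinarith [hL.le, mul_le_mul_of_nonneg_left this hL.le]
      _ = ((1 + α * L) ^ h - 1) * (M / L) := by
          have hrw : ∀ s ∈ Finset.range h,
              L * (((1 + α * L) ^ s - 1) * (M / L)) + M = (1 + α * L) ^ s * M := by
            intro s _; field_simp; ring
          rw [Finset.sum_congr rfl hrw, ← Finset.sum_mul, geom_sum_eq hne]
          have hLne : L ≠ 0 := ne_of_gt hL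
          have hαLne : α * L ≠ 0 := ne_of_gt hαLpos
          field_simp
          ring
  -- Step E : explicit bound on e h squared
  have hρ1 : (1:ℝ) ≤ 1 + 2 / (τ:ℝ) := by
    have : (0:ℝ) ≤ 2 / (τ:ℝ) := by positivity
    linarith
  have hstep : (1:ℝ) + α * L ≤ 1 + 2 / (τ:ℝ) := by linarith
  have hesq : ∀ h, 1 ≤ h → h < τ →
      e h ^ 2 ≤ α ^ 2 * (h:ℝ) ^ 2 * ((1 + 2 / (τ:ℝ)) ^ 2) ^ (h - 1) * M ^ 2 := by
    intro h h1 hlt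
    obtain ⟨m, rfl⟩ : ∃ m, h = m + 1 := ⟨h - 1, by omega⟩
    have hCh := hC (m + 1) hlt
    have hp := pow_one_add_sub_one_le hαLpos.le m
    have hML : 0 ≤ M / L := div_nonneg hM0 hL.le
    have e1 : e (m + 1) ≤ α * ((m:ℝ) + 1) * (1 + α * L) ^ m * M := by
      calc e (m + 1) ≤ ((1 + α * L) ^ (m + 1) - 1) * (M / L) := hCh
        _ ≤ (((m:ℝ) + 1) * (α * L) * (1 + α * L) ^ m) * (M / L) :=
            mul_le_mul_of_nonneg_right hp hML
        _ = α * ((m:ℝ) + 1) * (1 + α * L) ^ m * M := by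
            field_simp
    have e2 : α * ((m:ℝ) + 1) * (1 + α * L) ^ m * M
        ≤ α * ((m:ℝ) + 1) * (1 + 2 / (τ:ℝ)) ^ m * M := by
      have := pow_le_pow_left₀ (by positivity : (0:ℝ) ≤ 1 + α * L) hstep m
      have h4 : (0:ℝ) ≤ α * ((m:ℝ) + 1) := by positivity
      exact mul_le_mul_of_nonneg_right (mul_le_mul_of_nonneg_left this h4) hM0
    have e3 : e (m + 1) ≤ α * ((m:ℝ) + 1) * (1 + 2 / (τ:ℝ)) ^ m * M := e1.trans e2
    have e4 := mul_self_le_mul_self (he0 (m + 1)) e3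
    have e5 : (α * ((m:ℝ) + 1) * (1 + 2 / (τ:ℝ)) ^ m * M) * (α * ((m:ℝ) + 1) * (1 + 2 / (τ:ℝ)) ^ m * M)
        = α ^ 2 * ((m:ℝ) + 1) ^ 2 * ((1 + 2 / (τ:ℝ)) ^ 2) ^ m * M ^ 2 := by
      rw [← pow_mul, mul_comm 2 m, pow_mul]
      ring
    have : e (m + 1) ^ 2 ≤ α ^ 2 * ((m:ℝ) + 1) ^ 2 * ((1 + 2 / (τ:ℝ)) ^ 2) ^ m * M ^ 2 := by
      rw [sq]; rw [e5] at e4; exact e4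
    simpa [Nat.add_sub_cancel] using this
  -- Step F : sum of squared deviations
  have hgeo : ∑ h ∈ Finset.Icc 1 (τ - 1), ((1 + 2 / (τ:ℝ)) ^ 2) ^ (h - 1)
      ≤ (τ:ℝ) / 4 * ((1 + 2 / (τ:ℝ)) ^ 2) ^ (τ - 1) := by
    set ρ : ℝ := (1 + 2 / (τ:ℝ)) ^ 2 with hρ_def
    have hρ0 : (0:ℝ) ≤ ρ := by positivity
    have hρlb : 4 ≤ (τ:ℝ) * (ρ - 1) := by
      have : ρ = 1 + 4 / (τ:ℝ) + (2 / (τ:ℝ)) ^ 2 := by rw [hρ_def]; ring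
      rw [this]
      have h4 : (τ:ℝ) * (4 / (τ:ℝ)) = 4 := by field_simp
      have h5 : (0:ℝ) ≤ (τ:ℝ) * (2 / (τ:ℝ)) ^ 2 := by positivity
      nlinarith
    have hre : ∑ h ∈ Finset.Icc 1 (τ - 1), ρ ^ (h - 1)
        = ∑ i ∈ Finset.range (τ - 1), ρ ^ i := by
      rw [show Finset.Icc 1 (τ - 1) = Finset.Ico 1 ((τ - 1) + 1) by
        rw [Finset.Ico_add_one_right_eq_Icc], Finset.sum_Ico_eq_sum_range]
      simp
    rw [hre]
    set Sg : ℝ := ∑ i ∈ Finset.range (τ - 1), ρ ^ i with hSg_def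
    have hSg0 : 0 ≤ Sg := Finset.sum_nonneg fun i _ => by positivity
    have h1 : Sg * (ρ - 1) = ρ ^ (τ - 1) - 1 := geom_sum_mul ρ (τ - 1)
    have h2 : (0:ℝ) ≤ ρ ^ (τ - 1) := by positivity
    nlinarith [mul_le_mul_of_nonneg_left hρlb hSg0]
  have hSsum : ∑ h ∈ Finset.Icc 1 (τ - 1), e h ^ 2
      ≤ α ^ 2 * M ^ 2 * ((τ:ℝ) - 1) ^ 2 * ((τ:ℝ) / 4) * ((1 + 2 / (τ:ℝ)) ^ 2) ^ (τ - 1) := by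
    have step1 : ∑ h ∈ Finset.Icc 1 (τ - 1), e h ^ 2
        ≤ ∑ h ∈ Finset.Icc 1 (τ - 1),
            α ^ 2 * M ^ 2 * ((τ:ℝ) - 1) ^ 2 * ((1 + 2 / (τ:ℝ)) ^ 2) ^ (h - 1) := by
      refine Finset.sum_le_sum fun h hh => ?_
      obtain ⟨hh1, hh2⟩ := Finset.mem_Icc.mp hh
      have hhτ : h < τ := by omega
      have hcast : (h:ℝ) ≤ (τ:ℝ) - 1 := by
        have : (h:ℝ) ≤ ((τ - 1 : ℕ):ℝ) := by exact_mod_cast hh2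
        rwa [Nat.cast_sub hτ, Nat.cast_one] at this
      have h0h : (0:ℝ) ≤ (h:ℝ) := Nat.cast_nonneg h
      calc e h ^ 2 ≤ α ^ 2 * (h:ℝ) ^ 2 * ((1 + 2 / (τ:ℝ)) ^ 2) ^ (h - 1) * M ^ 2 :=
            hesq h hh1 hhτ
        _ ≤ α ^ 2 * ((τ:ℝ) - 1) ^ 2 * ((1 + 2 / (τ:ℝ)) ^ 2) ^ (h - 1) * M ^ 2 := by
            have hsq : (h:ℝ) ^ 2 ≤ ((τ:ℝ) - 1) ^ 2 := by nlinarith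
            have hrest : (0:ℝ) ≤ α ^ 2 * ((1 + 2 / (τ:ℝ)) ^ 2) ^ (h - 1) * M ^ 2 := by
              positivity
            nlinarith [mul_le_mul_of_nonneg_right hsq hrest]
        _ = α ^ 2 * M ^ 2 * ((τ:ℝ) - 1) ^ 2 * ((1 + 2 / (τ:ℝ)) ^ 2) ^ (h - 1) := by ring
    have step2 : ∑ h ∈ Finset.Icc 1 (τ - 1),
        α ^ 2 * M ^ 2 * ((τ:ℝ) - 1) ^ 2 * ((1 + 2 / (τ:ℝ)) ^ 2) ^ (h - 1)
        = α ^ 2 * M ^ 2 * ((τ:ℝ) - 1) ^ 2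
          * ∑ h ∈ Finset.Icc 1 (τ - 1), ((1 + 2 / (τ:ℝ)) ^ 2) ^ (h - 1) := by
      rw [Finset.mul_sum]
    have step3 : α ^ 2 * M ^ 2 * ((τ:ℝ) - 1) ^ 2
          * ∑ h ∈ Finset.Icc 1 (τ - 1), ((1 + 2 / (τ:ℝ)) ^ 2) ^ (h - 1)
        ≤ α ^ 2 * M ^ 2 * ((τ:ℝ) - 1) ^ 2
          * ((τ:ℝ) / 4 * ((1 + 2 / (τ:ℝ)) ^ 2) ^ (τ - 1)) := by
      refine mul_le_mul_of_nonneg_left hgeo ?_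
      have : (0:ℝ) ≤ ((τ:ℝ) - 1) ^ 2 := sq_nonneg _
      positivity
    calc ∑ h ∈ Finset.Icc 1 (τ - 1), e h ^ 2
        ≤ α ^ 2 * M ^ 2 * ((τ:ℝ) - 1) ^ 2
          * ∑ h ∈ Finset.Icc 1 (τ - 1), ((1 + 2 / (τ:ℝ)) ^ 2) ^ (h - 1) :=
          step1.trans_eq step2
      _ ≤ α ^ 2 * M ^ 2 * ((τ:ℝ) - 1) ^ 2
          * ((τ:ℝ) / 4 * ((1 + 2 / (τ:ℝ)) ^ 2) ^ (τ - 1)) := step3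
      _ = α ^ 2 * M ^ 2 * ((τ:ℝ) - 1) ^ 2 * ((τ:ℝ) / 4)
          * ((1 + 2 / (τ:ℝ)) ^ 2) ^ (τ - 1) := by ring
  -- Step G : decomposition of A + B
  have card_Icc : (Finset.Icc 1 (τ - 1)).card = τ - 1 := by
    rw [Nat.card_Icc]; omega
  have hcast : ((τ - 1 : ℕ):ℝ) = (τ:ℝ) - 1 := by
    rw [Nat.cast_sub hτ, Nat.cast_one]
  set v : ℕ → EuclideanSpace ℝ (Fin N × Fin n) := fun h =>
    α • (vecE (gradF g (X (τ * k))) - vecE (gradF g (X (τ * k + h))))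
      + α • vecE (D (τ * k + τ) - D (τ * k)) with hv_def
  have hvecP : vecE (((((τ : ℝ) - 1) * α) • gradF g (X (τ * k))
        - α • (∑ h ∈ Finset.Icc 1 (τ - 1), gradF g (X (τ * k + h))))
        + (((τ : ℝ) - 1) * α) • (D (τ * k + τ) - D (τ * k)))
      = ∑ h ∈ Finset.Icc 1 (τ - 1), v h := by
    rw [vecE_add, vecE_sub, vecE_smul, vecE_smul, vecE_smul, vecE_sum]
    simp only [hv_def]
    rw [Finset.sum_add_distrib, Finset.sum_const, card_Icc]
    have : ∑ h ∈ Finset.Icc 1 (τ - 1),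
        α • (vecE (gradF g (X (τ * k))) - vecE (gradF g (X (τ * k + h))))
        = α • ((τ - 1 : ℕ) • vecE (gradF g (X (τ * k)))
            - ∑ h ∈ Finset.Icc 1 (τ - 1), vecE (gradF g (X (τ * k + h)))) := by
      rw [← Finset.smul_sum, Finset.sum_sub_distrib, Finset.sum_const, card_Icc]
    rw [this]
    simp only [← Nat.cast_smul_eq_nsmul ℝ, hcast]
    module
  have hv_norm : ∀ h, ‖v h‖ ≤ α * (L * e h) + α * dd := by
    intro h
    have h1 : ‖vecE (gradF g (X (τ * k))) - vecE (gradF g (X (τ * k + h)))‖ ≤ L * e h := by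
      rw [← vecE_sub]
      have h2 := norm_vecE_gradF_sub hL.le g hsmooth (X (τ * k)) (X (τ * k + h))
      have h3 : ‖vecE (X (τ * k) - X (τ * k + h))‖ = e h := by
        rw [vecE_sub, norm_sub_rev, ← vecE_sub]
      rwa [h3] at h2
    calc ‖v h‖ ≤ ‖α • (vecE (gradF g (X (τ * k))) - vecE (gradF g (X (τ * k + h))))‖
          + ‖α • vecE (D (τ * k + τ) - D (τ * k))‖ := norm_add_le _ _
      _ = α * ‖vecE (gradF g (X (τ * k))) - vecE (gradF g (X (τ * k + h)))‖ + α * dd := by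
          rw [norm_smul, norm_smul, Real.norm_eq_abs, abs_of_pos hα]
      _ ≤ α * (L * e h) + α * dd := by
          have := mul_le_mul_of_nonneg_left h1 hα.le
          linarith
  have hdd0 : 0 ≤ dd := norm_nonneg _
  have hv_sq : ∀ h, ‖v h‖ ^ 2 ≤ 2 * α ^ 2 * L ^ 2 * e h ^ 2 + 2 * α ^ 2 * dd ^ 2 := by
    intro h
    have h1 := hv_norm h
    have h2 : (0:ℝ) ≤ α * (L * e h) + α * dd := by positivity
    nlinarith [norm_nonneg (v h), sq_nonneg (α * (L * e h) - α * dd)]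
  -- sum of ‖v h‖²
  have hSv : ∑ h ∈ Finset.Icc 1 (τ - 1), ‖v h‖ ^ 2
      ≤ 2 * α ^ 2 * L ^ 2 * (∑ h ∈ Finset.Icc 1 (τ - 1), e h ^ 2)
        + 2 * α ^ 2 * ((τ:ℝ) - 1) * dd ^ 2 := by
    calc ∑ h ∈ Finset.Icc 1 (τ - 1), ‖v h‖ ^ 2
        ≤ ∑ h ∈ Finset.Icc 1 (τ - 1), (2 * α ^ 2 * L ^ 2 * e h ^ 2 + 2 * α ^ 2 * dd ^ 2) :=
          Finset.sum_le_sum fun h _ => hv_sq h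
      _ = 2 * α ^ 2 * L ^ 2 * (∑ h ∈ Finset.Icc 1 (τ - 1), e h ^ 2)
            + ((τ - 1 : ℕ):ℝ) * (2 * α ^ 2 * dd ^ 2) := by
          rw [Finset.sum_add_distrib, ← Finset.mul_sum, Finset.sum_const, card_Icc,
            nsmul_eq_mul]
      _ = _ := by rw [hcast]; ring
  -- norm of the sum
  have hnormP : ‖∑ h ∈ Finset.Icc 1 (τ - 1), v h‖ ^ 2
      ≤ ((τ:ℝ) - 1) * ∑ h ∈ Finset.Icc 1 (τ - 1), ‖v h‖ ^ 2 := by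
    have h1 : ‖∑ h ∈ Finset.Icc 1 (τ - 1), v h‖ ≤ ∑ h ∈ Finset.Icc 1 (τ - 1), ‖v h‖ :=
      norm_sum_le _ _
    have h2 : (∑ h ∈ Finset.Icc 1 (τ - 1), ‖v h‖) ^ 2
        ≤ ((Finset.Icc 1 (τ - 1)).card : ℝ) * ∑ h ∈ Finset.Icc 1 (τ - 1), ‖v h‖ ^ 2 := by
      exact sq_sum_le_card_mul_sum_sq
    rw [card_Icc, hcast] at h2
    calc ‖∑ h ∈ Finset.Icc 1 (τ - 1), v h‖ ^ 2
        ≤ (∑ h ∈ Finset.Icc 1 (τ - 1), ‖v h‖) ^ 2 :=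
          pow_le_pow_left₀ (norm_nonneg _) h1 2
      _ ≤ _ := h2
  -- Final assembly
  have hM2 : M ^ 2 ≤ 2 * L ^ 2 * a ^ 2 + 2 * b ^ 2 := by
    rw [hM_def]; nlinarith [sq_nonneg (L * a - b)]
  have hexp : ((1:ℝ) + 2 / (τ:ℝ)) ^ (2 * τ - 2) = (((1:ℝ) + 2 / (τ:ℝ)) ^ 2) ^ (τ - 1) := by
    rw [← pow_mul]
    congr 1
    omega
  rw [frobSq_eq_norm_sq, frobSq_eq_norm_sq, frobSq_eq_norm_sq, frobSq_eq_norm_sq,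
    hvecP, ← hdd_def, ← ha_def, ← hb_def, hexp,
    inv_mul_le_iff₀ (by positivity : (0:ℝ) < (τ:ℝ) * α)]
  set R : ℝ := (((1:ℝ) + 2 / (τ:ℝ)) ^ 2) ^ (τ - 1) with hR_def
  have hR0 : (0:ℝ) ≤ R := by positivity
  set Se : ℝ := ∑ h ∈ Finset.Icc 1 (τ - 1), e h ^ 2 with hSe_def
  have hSe0 : 0 ≤ Se := Finset.sum_nonneg fun h _ => sq_nonneg _
  have hτm1 : (0:ℝ) ≤ (τ:ℝ) - 1 := by linarith
  calc ‖∑ h ∈ Finset.Icc 1 (τ - 1), v h‖ ^ 2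
      ≤ ((τ:ℝ) - 1) * ∑ h ∈ Finset.Icc 1 (τ - 1), ‖v h‖ ^ 2 := hnormP
    _ ≤ ((τ:ℝ) - 1) * (2 * α ^ 2 * L ^ 2 * Se + 2 * α ^ 2 * ((τ:ℝ) - 1) * dd ^ 2) :=
        mul_le_mul_of_nonneg_left hSv hτm1
    _ ≤ ((τ:ℝ) - 1) * (2 * α ^ 2 * L ^ 2
          * (α ^ 2 * M ^ 2 * ((τ:ℝ) - 1) ^ 2 * ((τ:ℝ) / 4) * R)
          + 2 * α ^ 2 * ((τ:ℝ) - 1) * dd ^ 2) := by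
        refine mul_le_mul_of_nonneg_left (add_le_add_left ?_ _) hτm1
        exact mul_le_mul_of_nonneg_left hSsum (by positivity)
    _ ≤ (τ:ℝ) * (2 * α ^ 2 * L ^ 2
          * (α ^ 2 * (2 * L ^ 2 * a ^ 2 + 2 * b ^ 2) * (τ:ℝ) ^ 2 * ((τ:ℝ) / 4) * R)
          + 2 * α ^ 2 * (τ:ℝ) * dd ^ 2) := by
        have h12 : ((τ:ℝ) - 1) * ((τ:ℝ) - 1) ≤ (τ:ℝ) * (τ:ℝ) := by nlinarith
        have p1 : ((τ:ℝ) - 1) * (2 * α ^ 2 * ((τ:ℝ) - 1) * dd ^ 2)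
            ≤ (τ:ℝ) * (2 * α ^ 2 * (τ:ℝ) * dd ^ 2) := by
          have heq1 : ((τ:ℝ) - 1) * (2 * α ^ 2 * ((τ:ℝ) - 1) * dd ^ 2)
              = ((τ:ℝ) - 1) * ((τ:ℝ) - 1) * (2 * α ^ 2 * dd ^ 2) := by ring
          have heq2 : (τ:ℝ) * (2 * α ^ 2 * (τ:ℝ) * dd ^ 2)
              = (τ:ℝ) * (τ:ℝ) * (2 * α ^ 2 * dd ^ 2) := by ring
          rw [heq1, heq2]
          exact mul_le_mul_of_nonneg_right h12 (by positivity)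
        have h13 : ((τ:ℝ) - 1) ^ 3 ≤ (τ:ℝ) ^ 3 := by nlinarith
        have hMt : M ^ 2 * ((τ:ℝ) - 1) ^ 3 ≤ (2 * L ^ 2 * a ^ 2 + 2 * b ^ 2) * (τ:ℝ) ^ 3 :=
          mul_le_mul hM2 h13 (by positivity) (by positivity)
        have p2 : ((τ:ℝ) - 1) * (2 * α ^ 2 * L ^ 2
              * (α ^ 2 * M ^ 2 * ((τ:ℝ) - 1) ^ 2 * ((τ:ℝ) / 4) * R))
            ≤ (τ:ℝ) * (2 * α ^ 2 * L ^ 2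
              * (α ^ 2 * (2 * L ^ 2 * a ^ 2 + 2 * b ^ 2) * (τ:ℝ) ^ 2 * ((τ:ℝ) / 4) * R)) := by
          have heq1 : ((τ:ℝ) - 1) * (2 * α ^ 2 * L ^ 2
              * (α ^ 2 * M ^ 2 * ((τ:ℝ) - 1) ^ 2 * ((τ:ℝ) / 4) * R))
              = 1 / 2 * α ^ 4 * L ^ 2 * R * (τ:ℝ) * (M ^ 2 * ((τ:ℝ) - 1) ^ 3) := by ring
          have heq2 : (τ:ℝ) * (2 * α ^ 2 * L ^ 2
              * (α ^ 2 * (2 * L ^ 2 * a ^ 2 + 2 * b ^ 2) * (τ:ℝ) ^ 2 * ((τ:ℝ) / 4) * R))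
              = 1 / 2 * α ^ 4 * L ^ 2 * R * (τ:ℝ)
                * ((2 * L ^ 2 * a ^ 2 + 2 * b ^ 2) * (τ:ℝ) ^ 3) := by ring
          rw [heq1, heq2]
          exact mul_le_mul_of_nonneg_left hMt (by positivity)
        rw [mul_add, mul_add]
        exact add_le_add p2 p1
    _ = (τ:ℝ) * α * (2 * α * (τ:ℝ) * dd ^ 2
          + (τ:ℝ) ^ 3 * R * L ^ 4 * α ^ 3 * a ^ 2
          + (τ:ℝ) ^ 3 * R * L ^ 2 * α ^ 3 * b ^ 2) := by ring
end

section
/- Let τ ≥ 1 be an integer and let 0 < μ ≤ L be reals. If 0 < α < min{ 1/(2τL), μ²/(2τ(1 + 2/τ)^{2τ−2}L³), μ/(5τ(1 + 2/τ)^{2τ−2}L²) }, then both strict learning-rate inequalities hold: 1 − τμα + τL²(τα − 2/μ)(1 + 2/τ)^{2τ−2}α > 0 and (1 − τLα)τμα + τ³L⁴(τα − 2/μ)(1 + 2/τ)^{2τ−2}α³ > 0. -/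
set_option linter.unusedVariables false
set_option maxHeartbeats 1000000

/-- any stepsize below the initial threshold of the learning-rate search
satisfies both strict learning-rate inequalities. -/
theorem learning_rate_initial_valid
    (τ : ℕ) (hτ : 1 ≤ τ) (μ L α : ℝ) (hμ : 0 < μ) (hLμ : μ ≤ L)
    (hα : 0 < α)
    (hαlt : α < min (min (1 / (2 * (τ : ℝ) * L))
        (μ ^ 2 / (2 * (τ : ℝ) * (1 + 2 / (τ : ℝ)) ^ (2 * τ - 2) * L ^ 3)))
        (μ / (5 * (τ : ℝ) * (1 + 2 / (τ : ℝ)) ^ (2 * τ - 2) * L ^ 2))) :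
    0 < 1 - (τ : ℝ) * μ * α
        + (τ : ℝ) * L ^ 2 * ((τ : ℝ) * α - 2 / μ) * (1 + 2 / (τ : ℝ)) ^ (2 * τ - 2) * α
    ∧ 0 < (1 - (τ : ℝ) * L * α) * (τ : ℝ) * μ * α
        + (τ : ℝ) ^ 3 * L ^ 4 * ((τ : ℝ) * α - 2 / μ)
            * (1 + 2 / (τ : ℝ)) ^ (2 * τ - 2) * α ^ 3 := by
  have hT : (1 : ℝ) ≤ (τ : ℝ) := by exact_mod_cast hτ
  have hT0 : (0 : ℝ) < (τ : ℝ) := by linarith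
  have hL : 0 < L := lt_of_lt_of_le hμ hLμ
  set c : ℝ := (1 + 2 / (τ : ℝ)) ^ (2 * τ - 2) with hc_def
  have hc1 : (1 : ℝ) ≤ c := by
    apply one_le_pow₀
    have : 0 < 2 / (τ : ℝ) := by positivity
    linarith
  have hc0 : (0 : ℝ) < c := by linarith
  clear_value c
  clear hc_def
  have h1 : α < 1 / (2 * (τ : ℝ) * L) :=
    lt_of_lt_of_le hαlt (le_trans (min_le_left _ _) (min_le_left _ _))
  have h2 : α < μ ^ 2 / (2 * (τ : ℝ) * c * L ^ 3) :=
    lt_of_lt_of_le hαlt (le_trans (min_le_left _ _) (min_le_right _ _))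
  have h3 : α < μ / (5 * (τ : ℝ) * c * L ^ 2) :=
    lt_of_lt_of_le hαlt (min_le_right _ _)
  have h1' : 2 * (τ : ℝ) * L * α < 1 := by
    have := (lt_div_iff₀ (by positivity : (0:ℝ) < 2 * (τ : ℝ) * L)).mp h1
    linarith
  have h2' : 2 * (τ : ℝ) * c * L ^ 3 * α < μ ^ 2 := by
    have := (lt_div_iff₀ (by positivity : (0:ℝ) < 2 * (τ : ℝ) * c * L ^ 3)).mp h2
    linarith
  have h3' : 5 * (τ : ℝ) * c * L ^ 2 * α < μ := by
    have := (lt_div_iff₀ (by positivity : (0:ℝ) < 5 * (τ : ℝ) * c * L ^ 2)).mp h3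
    linarith
  constructor
  · -- first inequality, multiply by μ
    have e1 : μ * (1 - (τ : ℝ) * μ * α
        + (τ : ℝ) * L ^ 2 * ((τ : ℝ) * α - 2 / μ) * c * α)
        = μ - (τ : ℝ) * μ ^ 2 * α + (τ : ℝ) * L ^ 2 * ((τ : ℝ) * μ * α - 2) * c * α := by
      field_simp
    have p1 : 0 < μ - (τ : ℝ) * μ ^ 2 * α
        + (τ : ℝ) * L ^ 2 * ((τ : ℝ) * μ * α - 2) * c * α := by
      nlinarith [mul_lt_mul_of_pos_right h1' hμ,
        mul_le_mul_of_nonneg_left hLμ (by positivity : (0:ℝ) ≤ (τ : ℝ) * μ * α),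
        mul_pos (mul_pos (mul_pos (mul_pos (mul_pos (mul_pos hT0 hT0) hμ) hL) hL) hc0)
          (mul_pos hα hα)]
    have hmul : 0 < μ * (1 - (τ : ℝ) * μ * α
        + (τ : ℝ) * L ^ 2 * ((τ : ℝ) * α - 2 / μ) * c * α) := by rw [e1]; exact p1
    by_contra hcon
    push_neg at hcon
    nlinarith [mul_nonpos_of_nonneg_of_nonpos hμ.le hcon]
  · have e2 : μ * ((1 - (τ : ℝ) * L * α) * (τ : ℝ) * μ * α
        + (τ : ℝ) ^ 3 * L ^ 4 * ((τ : ℝ) * α - 2 / μ) * c * α ^ 3)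
        = (1 - (τ : ℝ) * L * α) * (τ : ℝ) * μ ^ 2 * α
          + (τ : ℝ) ^ 3 * L ^ 4 * ((τ : ℝ) * μ * α - 2) * c * α ^ 3 := by
      field_simp
    have hprod : (2 * (τ : ℝ) * L * α) * (2 * (τ : ℝ) * c * L ^ 3 * α) < 1 * μ ^ 2 :=
      mul_lt_mul'' h1' h2' (by positivity) (by positivity)
    have hprod2 : ((τ : ℝ) * α / 2) * (4 * (τ : ℝ) ^ 2 * c * L ^ 4 * α ^ 2)
        < ((τ : ℝ) * α / 2) * μ ^ 2 := by
      apply mul_lt_mul_of_pos_left _ (by positivity)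
      nlinarith
    have hA : 2 * (τ : ℝ) ^ 3 * c * L ^ 4 * α ^ 3 < (τ : ℝ) * μ ^ 2 * α / 2 := by
      ring_nf at hprod2 ⊢
      linarith
    have hB : (τ : ℝ) * L * α * ((τ : ℝ) * μ ^ 2 * α) < 1 / 2 * ((τ : ℝ) * μ ^ 2 * α) := by
      apply mul_lt_mul_of_pos_right _ (by positivity)
      linarith
    have hC : (0:ℝ) ≤ (τ : ℝ) ^ 4 * μ * L ^ 4 * c * α ^ 4 := by positivity
    have p2 : 0 < (1 - (τ : ℝ) * L * α) * (τ : ℝ) * μ ^ 2 * α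
        + (τ : ℝ) ^ 3 * L ^ 4 * ((τ : ℝ) * μ * α - 2) * c * α ^ 3 := by
      nlinarith [hA, hB, hC]
    have hmul : 0 < μ * ((1 - (τ : ℝ) * L * α) * (τ : ℝ) * μ * α
        + (τ : ℝ) ^ 3 * L ^ 4 * ((τ : ℝ) * α - 2 / μ) * c * α ^ 3) := by rw [e2]; exact p2
    by_contra hcon
    push_neg at hcon
    nlinarith [mul_nonpos_of_nonneg_of_nonpos hμ.le hcon]
end

section
/- Let τ ≥ 1 be an integer and let 0 < μ ≤ L be reals, and set α = 2/(τL). Then (1 − τLα)τμα + τ³L⁴(τα − 2/μ)(1 + 2/τ)^{2τ−2}α³ < 0; that is, the second learning-rate search condition fails at α = 2/(τL), so the learning-rate search (which increases α from its initial value by a fixed stepsize while both conditions hold) terminates in finitely many steps. -/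
set_option linter.unusedVariables false

/-- at `α = 2/(τL)` the second learning-rate search condition fails,
so the learning-rate search terminates in finitely many steps. -/
theorem learning_rate_search_terminates
    (τ : ℕ) (hτ : 1 ≤ τ) (μ L α : ℝ) (hμ : 0 < μ) (hLμ : μ ≤ L)
    (hα : α = 2 / ((τ : ℝ) * L)) :
    (1 - (τ : ℝ) * L * α) * (τ : ℝ) * μ * α
      + (τ : ℝ) ^ 3 * L ^ 4 * ((τ : ℝ) * α - 2 / μ)
          * (1 + 2 / (τ : ℝ)) ^ (2 * τ - 2) * α ^ 3 < 0 := by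
  have hL : 0 < L := lt_of_lt_of_le hμ hLμ
  have hτ' : (0:ℝ) < (τ : ℝ) := by exact_mod_cast hτ
  have htL : (0:ℝ) < (τ : ℝ) * L := mul_pos hτ' hL
  have hαpos : 0 < α := by rw [hα]; positivity
  have h1 : (τ : ℝ) * L * α = 2 := by
    rw [hα]; field_simp
  have h2 : (τ : ℝ) * α - 2 / μ ≤ 0 := by
    have : (τ : ℝ) * α = 2 / L := by rw [hα]; field_simp
    rw [this]
    have : 2 / L ≤ 2 / μ := by
      apply div_le_div_of_nonneg_left (by norm_num) hμ hLμ
    linarith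
  have hpow : 0 < (1 + 2 / (τ : ℝ)) ^ (2 * τ - 2) := by positivity
  have term2 : (τ : ℝ) ^ 3 * L ^ 4 * ((τ : ℝ) * α - 2 / μ)
      * (1 + 2 / (τ : ℝ)) ^ (2 * τ - 2) * α ^ 3 ≤ 0 := by
    have h3 : (0:ℝ) < (τ : ℝ) ^ 3 * L ^ 4 := by positivity
    have h4 : (0:ℝ) < α ^ 3 := by positivity
    nlinarith [mul_nonneg (mul_nonneg (le_of_lt h3) (neg_nonneg.mpr h2)) (le_of_lt hpow)]
  have term1 : (1 - (τ : ℝ) * L * α) * (τ : ℝ) * μ * α < 0 := by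
    rw [h1]
    nlinarith [mul_pos (mul_pos hτ' hμ) hαpos]
  linarith
end

section
/- Fix a matrix D̄ ∈ ℝ^{N×n}, an integer τ ≥ 1, and a real α > 0 with ταL ≤ 2. Let Y : ℕ → ℝ^{N×n} satisfy Y(s+1) = Y(s) − α∇F(Y(s)) − αD̄ for all s ≥ 0. Then for every integer s ≥ 0: ‖Y(s) − X*‖ ≤ (1 + 2/τ)^s‖Y(0) − X*‖ + (τ/2)((1 + 2/τ)^s − 1)·α‖D̄ − D*‖. -/
open Matrix
set_option linter.unusedVariables false

/-- Frobenius norm `‖A‖ = √tr(AᵀA)`. -/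
noncomputable def fnorm {N n : ℕ} (A : Matrix (Fin N) (Fin n) ℝ) : ℝ :=
  Real.sqrt (Matrix.trace (Aᵀ * A))

lemma aux_trace_eq {N n : ℕ} (A : Matrix (Fin N) (Fin n) ℝ) :
    Matrix.trace (Aᵀ * A) = ∑ i, ∑ j, (A i j)^2 := by
  simp [Matrix.trace, Matrix.mul_apply, Matrix.diag, sq]
  rw [Finset.sum_comm]

noncomputable def auxToE {N n : ℕ} (A : Matrix (Fin N) (Fin n) ℝ) :
    EuclideanSpace ℝ (Fin N × Fin n) :=
  (WithLp.equiv 2 _).symm (fun p => A p.1 p.2)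

lemma aux_fnorm_eq_toE {N n : ℕ} (A : Matrix (Fin N) (Fin n) ℝ) :
    fnorm A = ‖auxToE A‖ := by
  rw [fnorm, aux_trace_eq, EuclideanSpace.norm_eq]
  congr 1
  rw [Fintype.sum_prod_type]
  simp [auxToE, Real.norm_eq_abs, sq_abs, WithLp.equiv_symm_apply, PiLp.toLp_apply]

lemma aux_fnorm_add_le {N n : ℕ} (A B : Matrix (Fin N) (Fin n) ℝ) :
    fnorm (A + B) ≤ fnorm A + fnorm B := by
  rw [aux_fnorm_eq_toE, aux_fnorm_eq_toE, aux_fnorm_eq_toE,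
    show auxToE (A + B) = auxToE A + auxToE B from rfl]
  exact norm_add_le _ _

lemma aux_fnorm_smul {N n : ℕ} (c : ℝ) (A : Matrix (Fin N) (Fin n) ℝ) :
    fnorm (c • A) = |c| * fnorm A := by
  rw [aux_fnorm_eq_toE, aux_fnorm_eq_toE, show auxToE (c • A) = c • auxToE A from rfl,
    norm_smul, Real.norm_eq_abs]

lemma aux_row_norm {n : ℕ} (v : Fin n → ℝ) :
    Real.sqrt (∑ j, (v j)^2) = ‖(WithLp.equiv 2 (Fin n → ℝ)).symm v‖ := by
  rw [EuclideanSpace.norm_eq]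
  congr 1
  simp [Real.norm_eq_abs, sq_abs, WithLp.equiv_symm_apply, PiLp.toLp_apply]

lemma aux_fnorm_le_of_rows {N n : ℕ} {A B : Matrix (Fin N) (Fin n) ℝ} {c : ℝ} (hc : 0 ≤ c)
    (h : ∀ i, Real.sqrt (∑ j, (A i j)^2) ≤ c * Real.sqrt (∑ j, (B i j)^2)) :
    fnorm A ≤ c * fnorm B := by
  rw [fnorm, fnorm, aux_trace_eq, aux_trace_eq,
    ← Real.sqrt_sq hc, ← Real.sqrt_mul (sq_nonneg c)]
  apply Real.sqrt_le_sqrt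
  rw [Finset.mul_sum]
  refine Finset.sum_le_sum fun i _ => ?_
  have h2 := pow_le_pow_left₀ (Real.sqrt_nonneg _) (h i) 2
  rw [Real.sq_sqrt (by positivity), mul_pow, Real.sq_sqrt (by positivity)] at h2
  exact h2

/-- growth bound for the within-round iteration
`Y(s+1) = Y(s) − α∇F(Y(s)) − αD̄`. -/
theorem within_round_growth_bound
    {N n : ℕ} (hN : 1 ≤ N) (hn : 1 ≤ n)
    (L μ : ℝ) (hμ : 0 < μ) (hLμ : μ ≤ L)
    (f : Fin N → EuclideanSpace ℝ (Fin n) → ℝ)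
    (g : Fin N → EuclideanSpace ℝ (Fin n) → EuclideanSpace ℝ (Fin n))
    (hdiff : ∀ i, Differentiable ℝ (f i))
    (hgrad : ∀ i x, HasGradientAt (f i) (g i x) x)
    (hsmooth : ∀ i x y, ‖g i x - g i y‖ ≤ L * ‖x - y‖)
    (hsc : ∀ i x y, μ * ‖x - y‖ ^ 2 ≤ (inner ℝ (g i x - g i y) (x - y) : ℝ))
    (xstar : EuclideanSpace ℝ (Fin n))
    (hxstar : ∀ y : EuclideanSpace ℝ (Fin n),
      (N : ℝ)⁻¹ * ∑ i : Fin N, f i xstar ≤ (N : ℝ)⁻¹ * ∑ i : Fin N, f i y)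
    (Xstar : Matrix (Fin N) (Fin n) ℝ)
    (hXstar : ∀ i : Fin N, Xstar i = (WithLp.equiv 2 (Fin n → ℝ)) xstar)
    (Dstar : Matrix (Fin N) (Fin n) ℝ) (hDstar : Dstar = - gradF g Xstar)
    (Dbar : Matrix (Fin N) (Fin n) ℝ)
    (τ : ℕ) (hτ : 1 ≤ τ) (α : ℝ) (hα : 0 < α)
    (hταL : (τ : ℝ) * α * L ≤ 2)
    (Y : ℕ → Matrix (Fin N) (Fin n) ℝ)
    (hY : ∀ s : ℕ, Y (s + 1) = Y s - α • gradF g (Y s) - α • Dbar) :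
    ∀ s : ℕ,
      fnorm (Y s - Xstar)
      ≤ (1 + 2 / (τ : ℝ)) ^ s * fnorm (Y 0 - Xstar)
        + ((τ : ℝ) / 2) * ((1 + 2 / (τ : ℝ)) ^ s - 1) * (α * fnorm (Dbar - Dstar)) := by
  have hτpos : (0:ℝ) < (τ:ℝ) := by exact_mod_cast hτ
  have hL : 0 < L := lt_of_lt_of_le hμ hLμ
  have hαL : α * L ≤ 2 / (τ:ℝ) := by
    rw [le_div_iff₀ hτpos]; nlinarith
  set ρ : ℝ := 1 + 2 / (τ:ℝ) with hρdef
  have hρ1 : (1:ℝ) ≤ ρ := by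
    have : 0 < 2 / (τ:ℝ) := by positivity
    simp [hρdef]; linarith
  have hc : 0 ≤ α * fnorm (Dbar - Dstar) := by
    have := Real.sqrt_nonneg (Matrix.trace ((Dbar - Dstar)ᵀ * (Dbar - Dstar)))
    rw [fnorm]; positivity
  -- one-step bound
  have key : ∀ s : ℕ, fnorm (Y (s+1) - Xstar)
      ≤ ρ * fnorm (Y s - Xstar) + α * fnorm (Dbar - Dstar) := by
    intro s
    have hdecomp : Y (s+1) - Xstar
        = ((Y s - Xstar) - α • (gradF g (Y s) - gradF g Xstar))
          + (-α) • (Dbar - Dstar) := by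
      rw [hY s, hDstar]; module
    rw [hdecomp]
    calc fnorm (((Y s - Xstar) - α • (gradF g (Y s) - gradF g Xstar)) + (-α) • (Dbar - Dstar))
        ≤ fnorm ((Y s - Xstar) - α • (gradF g (Y s) - gradF g Xstar))
          + fnorm ((-α) • (Dbar - Dstar)) := aux_fnorm_add_le _ _
      _ ≤ ρ * fnorm (Y s - Xstar) + α * fnorm (Dbar - Dstar) := by
          rw [aux_fnorm_smul, abs_neg, abs_of_pos hα]
          refine add_le_add_left ?_ _
          refine aux_fnorm_le_of_rows (by linarith) fun i => ?_
          rw [aux_row_norm, aux_row_norm]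
          set y : EuclideanSpace ℝ (Fin n) := (WithLp.equiv 2 (Fin n → ℝ)).symm (Y s i) with hy
          have hXs : (WithLp.equiv 2 (Fin n → ℝ)).symm (Xstar i) = xstar := by
            rw [hXstar i]; exact Equiv.symm_apply_apply _ _
          have hrow1 : (WithLp.equiv 2 (Fin n → ℝ)).symm
              (((Y s - Xstar) - α • (gradF g (Y s) - gradF g Xstar)) i)
              = (y - xstar) - α • (g i y - g i xstar) := by
            have : (WithLp.equiv 2 (Fin n → ℝ)).symm
                (((Y s - Xstar) - α • (gradF g (Y s) - gradF g Xstar)) i)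
                = ((WithLp.equiv 2 (Fin n → ℝ)).symm (Y s i)
                    - (WithLp.equiv 2 (Fin n → ℝ)).symm (Xstar i))
                  - α • (g i ((WithLp.equiv 2 (Fin n → ℝ)).symm (Y s i))
                    - g i ((WithLp.equiv 2 (Fin n → ℝ)).symm (Xstar i))) := rfl
            rw [this, hXs, ← hy]
          have hrow2 : (WithLp.equiv 2 (Fin n → ℝ)).symm ((Y s - Xstar) i)
              = y - xstar := by
            have : (WithLp.equiv 2 (Fin n → ℝ)).symm ((Y s - Xstar) i)
                = (WithLp.equiv 2 (Fin n → ℝ)).symm (Y s i)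
                  - (WithLp.equiv 2 (Fin n → ℝ)).symm (Xstar i) := rfl
            rw [this, hXs, ← hy]
          rw [hrow1, hrow2]
          have h1 : ‖(y - xstar) - α • (g i y - g i xstar)‖
              ≤ ‖y - xstar‖ + α * ‖g i y - g i xstar‖ := by
            refine (norm_sub_le _ _).trans ?_
            rw [norm_smul, Real.norm_eq_abs, abs_of_pos hα]
          have h2 := hsmooth i y xstar
          have h3 : 0 ≤ ‖y - xstar‖ := norm_nonneg _
          calc ‖(y - xstar) - α • (g i y - g i xstar)‖
              ≤ ‖y - xstar‖ + α * (L * ‖y - xstar‖) := by nlinarith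
            _ ≤ ρ * ‖y - xstar‖ := by rw [hρdef]; nlinarith
  -- induction
  intro s
  induction s with
  | zero => simp
  | succ s ih =>
      have hstep := key s
      have hmul : ρ * fnorm (Y s - Xstar)
          ≤ ρ * (ρ ^ s * fnorm (Y 0 - Xstar)
            + ((τ:ℝ)/2) * (ρ ^ s - 1) * (α * fnorm (Dbar - Dstar))) :=
        mul_le_mul_of_nonneg_left ih (by linarith)
      have hτne : (τ:ℝ) ≠ 0 := ne_of_gt hτpos
      have halg : ρ * (ρ ^ s * fnorm (Y 0 - Xstar)
            + ((τ:ℝ)/2) * (ρ ^ s - 1) * (α * fnorm (Dbar - Dstar)))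
          + α * fnorm (Dbar - Dstar)
          = ρ ^ (s+1) * fnorm (Y 0 - Xstar)
            + ((τ:ℝ)/2) * (ρ ^ (s+1) - 1) * (α * fnorm (Dbar - Dstar)) := by
        have h4 : ((τ:ℝ)/2) * (ρ - 1) = 1 := by
          rw [hρdef]; field_simp; ring
        linear_combination (-(α * fnorm (Dbar - Dstar))) * h4
      exact hstep.trans ((add_le_add_left hmul _).trans halg.le)
end

section
/- Assume JD(0) = 0. Then for every integer k ≥ 0 the FedCET iterates satisfy the identity ⟨D(τk+τ) − D*, X(τk+τ) − X*⟩ = ⟨D(τk+τ) − D*, D(τk+τ) − D(τk)⟩_M, where ⟨A, B⟩ = tr(AᵀB) and M = c⁻¹(I − J) − αI. -/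
open Matrix
set_option linter.unusedVariables false

/-- the trace identity
`⟨D(τk+τ) − D*, X(τk+τ) − X*⟩ = ⟨D(τk+τ) − D*, D(τk+τ) − D(τk)⟩_M`. -/
theorem fedcet_trace_identity
    {N n : ℕ} (hN : 1 ≤ N) (hn : 1 ≤ n)
    (L μ : ℝ) (hμ : 0 < μ) (hLμ : μ ≤ L)
    (f : Fin N → EuclideanSpace ℝ (Fin n) → ℝ)
    (g : Fin N → EuclideanSpace ℝ (Fin n) → EuclideanSpace ℝ (Fin n))
    (hdiff : ∀ i, Differentiable ℝ (f i))
    (hgrad : ∀ i x, HasGradientAt (f i) (g i x) x)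
    (hsmooth : ∀ i x y, ‖g i x - g i y‖ ≤ L * ‖x - y‖)
    (hsc : ∀ i x y, μ * ‖x - y‖ ^ 2 ≤ (inner ℝ (g i x - g i y) (x - y) : ℝ))
    (τ : ℕ) (hτ : 1 ≤ τ) (α c : ℝ) (hα : 0 < α) (hc : 0 < c)
    (X D : ℕ → Matrix (Fin N) (Fin n) ℝ)
    (hiter : ∀ t : ℕ,
      D (t + 1) = D t
          + c • (((1 : Matrix (Fin N) (Fin N) ℝ)
              - (if τ ∣ (t + 1) then Jmat N else 1)) *
            (X t - α • gradF g (X t) - α • D t)) ∧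
      X (t + 1) = X t - α • gradF g (X t) - α • D (t + 1))
    (hD0 : Jmat N * D 0 = 0)
    (xstar : EuclideanSpace ℝ (Fin n))
    (hxstar : ∀ y : EuclideanSpace ℝ (Fin n),
      (N : ℝ)⁻¹ * ∑ i : Fin N, f i xstar ≤ (N : ℝ)⁻¹ * ∑ i : Fin N, f i y)
    (Xstar : Matrix (Fin N) (Fin n) ℝ)
    (hXstar : ∀ i : Fin N, Xstar i = (WithLp.equiv 2 (Fin n → ℝ)) xstar)
    (Dstar : Matrix (Fin N) (Fin n) ℝ) (hDstar : Dstar = - gradF g Xstar)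
    (M : Matrix (Fin N) (Fin N) ℝ)
    (hM : M = c⁻¹ • ((1 : Matrix (Fin N) (Fin N) ℝ) - Jmat N) - α • 1) :
    ∀ k : ℕ,
      Matrix.trace ((D (τ * k + τ) - Dstar)ᵀ * (X (τ * k + τ) - Xstar))
      = Matrix.trace ((D (τ * k + τ) - Dstar)ᵀ * M * (D (τ * k + τ) - D (τ * k))) := by
  intro k
  have hNne : (N : ℝ) ≠ 0 := Nat.cast_ne_zero.mpr (by omega)
  have hJJ : Jmat N * Jmat N = Jmat N := by
    ext i j
    simp only [Jmat, Matrix.mul_apply, Matrix.of_apply, Finset.sum_const,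
      Finset.card_univ, Fintype.card_fin, nsmul_eq_mul]
    field_simp
  have hJT : (Jmat N)ᵀ = Jmat N := rfl
  -- J D(t) = 0 for all t
  have hJD : ∀ t, Jmat N * D t = 0 := by
    intro t
    induction t with
    | zero => exact hD0
    | succ t ih =>
      rw [(hiter t).1, Matrix.mul_add, ih, zero_add, Matrix.mul_smul, ← Matrix.mul_assoc]
      by_cases h : τ ∣ (t + 1) <;>
        simp [h, Matrix.mul_sub, Matrix.mul_one, hJJ]
  -- the average gradient vanishes at xstar
  have hsum : ∑ i : Fin N, g i xstar = 0 := by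
    have hmin : IsLocalMin (fun y => (N : ℝ)⁻¹ * ∑ i : Fin N, f i y) xstar :=
      Filter.Eventually.of_forall hxstar
    have hfd : HasFDerivAt (fun y => (N : ℝ)⁻¹ * ∑ i : Fin N, f i y)
        ((N : ℝ)⁻¹ • ∑ i : Fin N,
          (InnerProductSpace.toDual ℝ (EuclideanSpace ℝ (Fin n))) (g i xstar)) xstar := by
      refine HasFDerivAt.const_mul ?_ _
      exact HasFDerivAt.fun_sum fun i _ => (hgrad i xstar).hasFDerivAt
    have h0 := hmin.hasFDerivAt_eq_zero hfd
    have h1 : (InnerProductSpace.toDual ℝ (EuclideanSpace ℝ (Fin n)))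
        ((N : ℝ)⁻¹ • ∑ i : Fin N, g i xstar) = 0 := by
      rw [map_smulₛₗ, map_sum]
      simpa using h0
    have h2 : ((N : ℝ)⁻¹ • ∑ i : Fin N, g i xstar : EuclideanSpace ℝ (Fin n)) = 0 :=
      (InnerProductSpace.toDual ℝ (EuclideanSpace ℝ (Fin n))).injective
        (by rw [h1, map_zero])
    rcases smul_eq_zero.mp h2 with h | h
    · exact absurd h (inv_ne_zero hNne)
    · exact h
  have hsum' : ∀ j : Fin n, (∑ i : Fin N, (g i xstar) j) = (0 : ℝ) := by
    intro j
    have h1 : (∑ i : Fin N, g i xstar) j = (0 : ℝ) := by rw [hsum]; rfl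
    rw [← h1]
    rw [WithLp.ofLp_sum]
    exact (Finset.sum_apply j Finset.univ fun i => (g i xstar : Fin n → ℝ)).symm
  have hJDstar : Jmat N * Dstar = 0 := by
    rw [hDstar]
    ext i j
    have hX : ∀ i0 : Fin N,
        ((WithLp.equiv 2 (Fin n → ℝ)).symm (Xstar i0)) = xstar := by
      intro i0; rw [hXstar i0]; rfl
    simp only [Matrix.mul_apply, Matrix.neg_apply, Jmat, gradF, Matrix.of_apply,
      Matrix.zero_apply, hX, WithLp.equiv_apply]
    calc ∑ x : Fin N, (N : ℝ)⁻¹ * -((g x xstar) j)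
        = (N : ℝ)⁻¹ * -(∑ x : Fin N, (g x xstar) j) := by
          rw [← Finset.sum_neg_distrib, ← Finset.mul_sum]
      _ = 0 := by rw [hsum' j, neg_zero, mul_zero]
  have hJX : Jmat N * Xstar = Xstar := by
    ext i j
    simp only [Matrix.mul_apply, Jmat, Matrix.of_apply, hXstar, WithLp.equiv_apply,
      Finset.sum_const, Finset.card_univ, Fintype.card_fin, nsmul_eq_mul]
    field_simp
  -- D is constant within the period
  have hDc : ∀ r, r ≤ τ - 1 → D (τ * k + r) = D (τ * k) := by
    intro r
    induction r with
    | zero => intro _; rfl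
    | succ r ih =>
      intro hr
      have hnd : ¬ τ ∣ (τ * k + r + 1) := by
        intro hdvd
        have h1 : τ ∣ r + 1 := by
          have := (Nat.dvd_add_right (dvd_mul_right τ k)).mp (by rwa [Nat.add_assoc] at hdvd)
          exact this
        have := Nat.le_of_dvd (Nat.succ_pos r) h1
        omega
      have : τ * k + (r + 1) = (τ * k + r) + 1 := by ring
      rw [this, (hiter (τ * k + r)).1, if_neg hnd, sub_self, Matrix.zero_mul,
        smul_zero, add_zero]
      exact ih (by omega)
  have ht0 : τ * k + (τ - 1) + 1 = τ * k + τ := by omega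
  have hDk : D (τ * k + (τ - 1)) = D (τ * k) := hDc (τ - 1) le_rfl
  have hdvd : τ ∣ (τ * k + (τ - 1) + 1) := by rw [ht0]; exact ⟨k + 1, by ring⟩
  have hDT : D (τ * k + τ) = D (τ * k)
      + c • (((1 : Matrix (Fin N) (Fin N) ℝ) - Jmat N) *
          (X (τ * k + (τ - 1)) - α • gradF g (X (τ * k + (τ - 1))) - α • D (τ * k))) := by
    rw [← ht0, (hiter (τ * k + (τ - 1))).1, if_pos hdvd, hDk]
  have hΔ : D (τ * k + τ) - D (τ * k)
      = c • (((1 : Matrix (Fin N) (Fin N) ℝ) - Jmat N) *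
          (X (τ * k + (τ - 1)) - α • gradF g (X (τ * k + (τ - 1))) - α • D (τ * k))) := by
    rw [hDT]; abel
  have hXT : X (τ * k + τ)
      = (X (τ * k + (τ - 1)) - α • gradF g (X (τ * k + (τ - 1))) - α • D (τ * k))
        - α • (D (τ * k + τ) - D (τ * k)) := by
    rw [← ht0, (hiter (τ * k + (τ - 1))).2, ht0, smul_sub]
    abel
  -- transpose facts
  have hJA : Jmat N * (D (τ * k + τ) - Dstar) = 0 := by
    rw [Matrix.mul_sub, hJD, hJDstar, sub_self]
  have hAJ : (D (τ * k + τ) - Dstar)ᵀ * Jmat N = 0 := by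
    have h := congrArg Matrix.transpose hJA
    rwa [Matrix.transpose_mul, hJT, Matrix.transpose_zero] at h
  have hAP : (D (τ * k + τ) - Dstar)ᵀ * ((1 : Matrix (Fin N) (Fin N) ℝ) - Jmat N)
      = (D (τ * k + τ) - Dstar)ᵀ := by
    rw [Matrix.mul_sub, Matrix.mul_one, hAJ, sub_zero]
  have hAX : (D (τ * k + τ) - Dstar)ᵀ * Xstar = 0 := by
    rw [← hJX, ← Matrix.mul_assoc, hAJ, Matrix.zero_mul]
  have hAPY : ∀ B : Matrix (Fin N) (Fin n) ℝ,
      (D (τ * k + τ) - Dstar)ᵀ * (((1 : Matrix (Fin N) (Fin N) ℝ) - Jmat N) * B)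
      = (D (τ * k + τ) - Dstar)ᵀ * B := by
    intro B
    rw [← Matrix.mul_assoc, hAP]
  have hR : (D (τ * k + τ) - Dstar)ᵀ *
        (c⁻¹ • ((1 : Matrix (Fin N) (Fin N) ℝ) - Jmat N) - α • 1) *
        (c • (((1 : Matrix (Fin N) (Fin N) ℝ) - Jmat N) *
          (X (τ * k + (τ - 1)) - α • gradF g (X (τ * k + (τ - 1))) - α • D (τ * k))))
      = (D (τ * k + τ) - Dstar)ᵀ *
          (X (τ * k + (τ - 1)) - α • gradF g (X (τ * k + (τ - 1))) - α • D (τ * k))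
        - (α * c) • ((D (τ * k + τ) - Dstar)ᵀ *
          (X (τ * k + (τ - 1)) - α • gradF g (X (τ * k + (τ - 1))) - α • D (τ * k))) := by
    set A := (D (τ * k + τ) - Dstar)ᵀ with hA
    set Q := (1 : Matrix (Fin N) (Fin N) ℝ) - Jmat N with hQ
    set B := X (τ * k + (τ - 1)) - α • gradF g (X (τ * k + (τ - 1))) - α • D (τ * k) with hB
    calc A * (c⁻¹ • Q - α • 1) * (c • (Q * B))
        = c • (A * (c⁻¹ • Q - α • 1) * (Q * B)) := by
          rw [Matrix.mul_smul]
      _ = c • ((c⁻¹ • (A * Q) - α • (A * (1 : Matrix (Fin N) (Fin N) ℝ))) * (Q * B)) := by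
          rw [Matrix.mul_sub A (c⁻¹ • Q) (α • (1 : Matrix (Fin N) (Fin N) ℝ)),
            Matrix.mul_smul, Matrix.mul_smul]
      _ = c • ((c⁻¹ • A - α • A) * (Q * B)) := by
          rw [hAP, Matrix.mul_one]
      _ = c • (c⁻¹ • (A * (Q * B)) - α • (A * (Q * B))) := by
          rw [Matrix.sub_mul (c⁻¹ • A) (α • A) (Q * B), Matrix.smul_mul, Matrix.smul_mul]
      _ = c • (c⁻¹ • (A * B) - α • (A * B)) := by rw [hAPY]
      _ = A * B - (α * c) • (A * B) := by
          rw [smul_sub, smul_smul, smul_smul, mul_inv_cancel₀ hc.ne', one_smul, mul_comm c α]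
  refine congrArg Matrix.trace ?_
  rw [hXT, hM, hΔ, hR]
  rw [Matrix.mul_sub ((D (τ * k + τ) - Dstar)ᵀ)
      (X (τ * k + (τ - 1)) - α • gradF g (X (τ * k + (τ - 1))) - α • D (τ * k)
        - α • (c • (((1 : Matrix (Fin N) (Fin N) ℝ) - Jmat N) *
          (X (τ * k + (τ - 1)) - α • gradF g (X (τ * k + (τ - 1))) - α • D (τ * k))))) Xstar,
    hAX, sub_zero,
    Matrix.mul_sub ((D (τ * k + τ) - Dstar)ᵀ)
      (X (τ * k + (τ - 1)) - α • gradF g (X (τ * k + (τ - 1))) - α • D (τ * k))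
      (α • (c • (((1 : Matrix (Fin N) (Fin N) ℝ) - Jmat N) *
        (X (τ * k + (τ - 1)) - α • gradF g (X (τ * k + (τ - 1))) - α • D (τ * k))))),
    Matrix.mul_smul, Matrix.mul_smul, hAPY, smul_smul]
end
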